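/- Let K ⊂ ℝ^d be a compact convex set of volume 1 and let B ⊆ K, Ã ⊆ [0, ã] be Borel sets with ã > 0. Then (1/2) ∫_K ∫_K 1((x+y)/2 ∈ B, ‖x−y‖ ∈ Ã) dx dy differs from (κ_d/2)·vol(B)·d·∫₀^∞ 1(r ∈ Ã) r^{d−1} dr by at most 2 C_K κ_d (ã^{d+1} + ã^{2d}), where C_K depends only on d and K and satisfies vol({x ∈ ℝ^d ∖ K : dist(x,K) ≤ ã}) ≤ C_K(ã + ã^d). -/

import Mathlib

open MeasureTheory Metric

namespace MidpointDistanceAux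

variable {d : ℕ}

local notation "E" => EuclideanSpace ℝ (Fin d)

lemma meas_normSet (A : Set ℝ) (hA : MeasurableSet A) :
    MeasurableSet {u : E | ‖u‖ ∈ A} := measurable_norm hA

lemma meas_Shat (B : Set E) (hB : MeasurableSet B) (A : Set ℝ) (hA : MeasurableSet A) :
    MeasurableSet {p : E × E | (2:ℝ)⁻¹ • (p.2 + p.1) ∈ B ∧ ‖p.2 - p.1‖ ∈ A} := by
  have h1 : MeasurableSet ((fun p : E × E => (2:ℝ)⁻¹ • (p.2 + p.1)) ⁻¹' B) :=
    ((measurable_snd.add measurable_fst).const_smul ((2:ℝ)⁻¹)) hB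
  have h2 : MeasurableSet ((fun p : E × E => ‖p.2 - p.1‖) ⁻¹' A) :=
    ((measurable_snd.sub measurable_fst).norm) hA
  exact h1.inter h2

/-- The product measure of the unconstrained midpoint/distance set. -/
lemma prod_Shat (B : Set E) (hB : MeasurableSet B) (A : Set ℝ) (hA : MeasurableSet A) :
    ((volume : Measure E).prod volume) {p : E × E | (2:ℝ)⁻¹ • (p.2 + p.1) ∈ B ∧ ‖p.2 - p.1‖ ∈ A}
      = volume B * volume {u : E | ‖u‖ ∈ A} := by
  have hmA : MeasurableSet {u : E | ‖u‖ ∈ A} := meas_normSet A hA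
  have hS' : MeasurableSet {q : E × E | (2:ℝ)⁻¹ • q.1 + q.2 ∈ B ∧ ‖q.1‖ ∈ A} := by
    have h1 : MeasurableSet ((fun q : E × E => (2:ℝ)⁻¹ • q.1 + q.2) ⁻¹' B) :=
      ((measurable_fst.const_smul ((2:ℝ)⁻¹)).add measurable_snd) hB
    have h2 : MeasurableSet ((fun q : E × E => ‖q.1‖) ⁻¹' A) :=
      (measurable_norm.comp measurable_fst) hA
    exact h1.inter h2
  have hT : MeasurePreserving (fun p : E × E => (p.2 - p.1, p.1))
      ((volume : Measure E).prod volume) ((volume : Measure E).prod volume) :=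
    (measurePreserving_sub_prod volume volume).comp Measure.measurePreserving_swap
  have hpre : {p : E × E | (2:ℝ)⁻¹ • (p.2 + p.1) ∈ B ∧ ‖p.2 - p.1‖ ∈ A}
      = (fun p : E × E => (p.2 - p.1, p.1)) ⁻¹' {q : E × E | (2:ℝ)⁻¹ • q.1 + q.2 ∈ B ∧ ‖q.1‖ ∈ A} := by
    ext p
    simp only [Set.mem_setOf_eq, Set.mem_preimage]
    have : (2:ℝ)⁻¹ • (p.2 - p.1) + p.1 = (2:ℝ)⁻¹ • (p.2 + p.1) := by
      module
    rw [this]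
  rw [hpre, hT.measure_preimage hS'.nullMeasurableSet]
  rw [Measure.prod_apply hS']
  have hsec : ∀ u : E, (volume : Measure E) (Prod.mk u ⁻¹' {q : E × E | (2:ℝ)⁻¹ • q.1 + q.2 ∈ B ∧ ‖q.1‖ ∈ A})
      = Set.indicator {u : E | ‖u‖ ∈ A} (fun _ => volume B) u := by
    intro u
    by_cases hu : ‖u‖ ∈ A
    · have : Prod.mk u ⁻¹' {q : E × E | (2:ℝ)⁻¹ • q.1 + q.2 ∈ B ∧ ‖q.1‖ ∈ A}
          = (fun x : E => (2:ℝ)⁻¹ • u + x) ⁻¹' B := by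
        ext x; simp [Set.mem_preimage, hu]
      rw [this, measure_preimage_add, Set.indicator_of_mem (show u ∈ {u : E | ‖u‖ ∈ A} from hu)]
    · have : Prod.mk u ⁻¹' {q : E × E | (2:ℝ)⁻¹ • q.1 + q.2 ∈ B ∧ ‖q.1‖ ∈ A} = ∅ := by
        ext x; simp [Set.mem_preimage, hu]
      rw [this, measure_empty, Set.indicator_of_notMem (show u ∉ {u : E | ‖u‖ ∈ A} from hu)]
  simp only [hsec]
  rw [lintegral_indicator hmA, setLIntegral_const, mul_comm]

/-- Polar-coordinate formula for the volume of a norm-level set. -/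
lemma vol_normSet (hd : 1 ≤ d) (A : Set ℝ) (hA : MeasurableSet A) :
    (volume {u : E | ‖u‖ ∈ A}).toReal
      = d * (volume (Metric.closedBall (0 : E) 1)).toReal
        * (∫ r in Set.Ioi (0 : ℝ), Set.indicator A (fun u => u ^ (d - 1)) r) := by
  haveI : Nonempty (Fin d) := ⟨⟨0, hd⟩⟩
  have h := MeasureTheory.integral_fun_norm_addHaar (volume : Measure E)
    (Set.indicator A (fun _ => (1:ℝ)))
  rw [finrank_euclideanSpace_fin] at h
  have hmA : MeasurableSet {u : E | ‖u‖ ∈ A} := meas_normSet A hA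
  have h1 : (∫ x : E, Set.indicator A (fun _ => (1:ℝ)) ‖x‖)
      = (volume {u : E | ‖u‖ ∈ A}).toReal := by
    rw [show (fun x : E => Set.indicator A (fun _ => (1:ℝ)) ‖x‖)
        = Set.indicator {u : E | ‖u‖ ∈ A} (fun _ => (1:ℝ)) from ?_]
    · exact integral_indicator_one hmA
    · ext x
      by_cases hx : ‖x‖ ∈ A
      · rw [Set.indicator_of_mem hx, Set.indicator_of_mem (show x ∈ _ from hx)]
      · rw [Set.indicator_of_notMem hx, Set.indicator_of_notMem (show x ∉ _ from hx)]
  have h2 : ∀ y : ℝ, y ^ (d-1) • Set.indicator A (fun _ => (1:ℝ)) y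
      = Set.indicator A (fun u => u ^ (d-1)) y := by
    intro y
    by_cases hy : y ∈ A
    · simp [Set.indicator_of_mem hy]
    · simp [Set.indicator_of_notMem hy]
  rw [h1] at h
  simp only [h2] at h
  rw [h, measureReal_def, Measure.addHaar_unitClosedBall_eq_addHaar_unitBall, nsmul_eq_mul, smul_eq_mul]
  ring

/-- Rewriting the double integral as the product measure of `(K ×ˢ K) ∩ Ŝ`. -/
lemma double_integral_eq (K : Set E) (hKm : MeasurableSet K) (hKfin : volume K ≠ ⊤)
    (B : Set E) (hB : MeasurableSet B) (A : Set ℝ) (hA : MeasurableSet A) :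
    (∫ y in K, ∫ x in K,
        Set.indicator {x : E | (2:ℝ)⁻¹ • (x + y) ∈ B ∧ ‖x - y‖ ∈ A} (fun _ => (1:ℝ)) x)
      = (((volume : Measure E).prod volume)
          ((K ×ˢ K) ∩ {p : E × E | (2:ℝ)⁻¹ • (p.2 + p.1) ∈ B ∧ ‖p.2 - p.1‖ ∈ A})).toReal := by
  have hS : MeasurableSet {p : E × E | (2:ℝ)⁻¹ • (p.2 + p.1) ∈ B ∧ ‖p.2 - p.1‖ ∈ A} :=
    meas_Shat B hB A hA
  set U : Set (E × E) := (K ×ˢ K) ∩ {p : E × E | (2:ℝ)⁻¹ • (p.2 + p.1) ∈ B ∧ ‖p.2 - p.1‖ ∈ A} with hU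
  have hUm : MeasurableSet U := (hKm.prod hKm).inter hS
  have hsec : ∀ y : E, Set.indicator K (fun y => (volume (K ∩ {x : E | (2:ℝ)⁻¹ • (x + y) ∈ B ∧ ‖x - y‖ ∈ A})).toReal) y
      = (volume (Prod.mk y ⁻¹' U)).toReal := by
    intro y
    by_cases hy : y ∈ K
    · rw [Set.indicator_of_mem hy]
      congr 2
      ext x
      simp [hU, Set.mem_prod, hy, and_comm]
    · rw [Set.indicator_of_notMem hy]
      have : Prod.mk y ⁻¹' U = ∅ := by
        ext x; simp [hU, Set.mem_prod, hy]
      simp [this]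
  have hinner : ∀ y : E, (∫ x in K,
        Set.indicator {x : E | (2:ℝ)⁻¹ • (x + y) ∈ B ∧ ‖x - y‖ ∈ A} (fun _ => (1:ℝ)) x)
      = (volume (K ∩ {x : E | (2:ℝ)⁻¹ • (x + y) ∈ B ∧ ‖x - y‖ ∈ A})).toReal := by
    intro y
    have hsy : MeasurableSet {x : E | (2:ℝ)⁻¹ • (x + y) ∈ B ∧ ‖x - y‖ ∈ A} := by
      have h1 : MeasurableSet ((fun x : E => (2:ℝ)⁻¹ • (x + y)) ⁻¹' B) :=
        ((measurable_id.add_const y).const_smul ((2:ℝ)⁻¹)) hB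
      have h2 : MeasurableSet ((fun x : E => ‖x - y‖) ⁻¹' A) :=
        ((measurable_id.sub_const y).norm) hA
      exact h1.inter h2
    rw [integral_indicator_const (1:ℝ) hsy, measureReal_restrict_apply hsy, Set.inter_comm,
      smul_eq_mul, mul_one, measureReal_def]
  simp only [hinner]
  rw [← integral_indicator hKm]
  simp only [hsec]
  rw [integral_toReal (measurable_measure_prodMk_left hUm).aemeasurable ?_]
  · rw [← Measure.prod_apply hUm]
  · refine Filter.Eventually.of_forall fun y => ?_
    refine lt_of_le_of_lt (measure_mono ?_) hKfin.lt_top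
    intro x hx
    exact (hx.1).2

/-- Product measure of the one-sided error set. -/
lemma vol_W1 (Sh : Set E) (hSh : MeasurableSet Sh) (a : ℝ) :
    ((volume : Measure E).prod volume) {p : E × E | p.1 ∈ Sh ∧ dist p.2 p.1 ≤ a}
      = volume Sh * volume (Metric.closedBall (0:E) a) := by
  have hW : MeasurableSet {p : E × E | p.1 ∈ Sh ∧ dist p.2 p.1 ≤ a} := by
    have h1 : MeasurableSet ((fun p : E × E => p.1) ⁻¹' Sh) := measurable_fst hSh
    have h2 : MeasurableSet ((fun p : E × E => dist p.2 p.1) ⁻¹' Set.Iic a) :=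
      (measurable_snd.dist measurable_fst) measurableSet_Iic
    exact h1.inter h2
  rw [Measure.prod_apply hW]
  have hsec : ∀ y : E, (volume : Measure E) (Prod.mk y ⁻¹' {p : E × E | p.1 ∈ Sh ∧ dist p.2 p.1 ≤ a})
      = Set.indicator Sh (fun _ => volume (Metric.closedBall (0:E) a)) y := by
    intro y
    by_cases hy : y ∈ Sh
    · have : Prod.mk y ⁻¹' {p : E × E | p.1 ∈ Sh ∧ dist p.2 p.1 ≤ a} = Metric.closedBall y a := by
        ext x; simp [hy, Metric.mem_closedBall]
      rw [this, Measure.addHaar_closedBall_center, Set.indicator_of_mem hy]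
    · have : Prod.mk y ⁻¹' {p : E × E | p.1 ∈ Sh ∧ dist p.2 p.1 ≤ a} = ∅ := by
        ext x; simp [hy]
      rw [this, measure_empty, Set.indicator_of_notMem hy]
  simp only [hsec]
  rw [lintegral_indicator hSh, setLIntegral_const, mul_comm]

end MidpointDistanceAux

open MidpointDistanceAux

/-- Quantitative comparison of the midpoint/distance integral over `K × K` with its
translation-invariant limit. `C_K` is any constant bounding the volume of the outer
parallel shell of `K`. -/
theorem integral_midpoint_distance_approx
    {d : ℕ} (hd : 1 ≤ d) (K : Set (EuclideanSpace ℝ (Fin d)))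
    (hKc : IsCompact K) (hKconv : Convex ℝ K) (hKvol : volume K = 1)
    (B : Set (EuclideanSpace ℝ (Fin d))) (hB : MeasurableSet B) (hBK : B ⊆ K)
    (atil : ℝ) (hatil : 0 < atil) (A : Set ℝ) (hA : MeasurableSet A)
    (hAsub : A ⊆ Set.Icc 0 atil)
    (CK : ℝ) (hCK : 0 < CK)
    (hshell : ∀ a : ℝ, 0 < a →
      (volume {x : EuclideanSpace ℝ (Fin d) | x ∉ K ∧ Metric.infDist x K ≤ a}).toReal
        ≤ CK * (a + a ^ d)) :
    |((1 : ℝ) / 2) * (∫ y in K, ∫ x in K,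
        Set.indicator {x : EuclideanSpace ℝ (Fin d) |
          (2 : ℝ)⁻¹ • (x + y) ∈ B ∧ ‖x - y‖ ∈ A} (fun _ => (1 : ℝ)) x)
      - ((volume (Metric.closedBall (0 : EuclideanSpace ℝ (Fin d)) 1)).toReal / 2)
          * (volume B).toReal * d
          * (∫ r in Set.Ioi (0 : ℝ), Set.indicator A (fun u => u ^ (d - 1)) r)|
      ≤ 2 * CK * (volume (Metric.closedBall (0 : EuclideanSpace ℝ (Fin d)) 1)).toReal
          * (atil ^ (d + 1) + atil ^ (2 * d)) := by
  classical
  have hKm : MeasurableSet K := hKc.isClosed.measurableSet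
  have hKfin : volume K ≠ ⊤ := by rw [hKvol]; exact ENNReal.one_ne_top
  have hKne : K.Nonempty := by
    rcases Set.eq_empty_or_nonempty K with h | h
    · rw [h] at hKvol; simp at hKvol
    · exact h
  set ν := (volume : Measure (EuclideanSpace ℝ (Fin d))).prod (volume : Measure (EuclideanSpace ℝ (Fin d))) with hν
  set Shat := {p : EuclideanSpace ℝ (Fin d) × EuclideanSpace ℝ (Fin d) | (2:ℝ)⁻¹ • (p.2 + p.1) ∈ B ∧ ‖p.2 - p.1‖ ∈ A} with hShat
  set U := (K ×ˢ K) ∩ Shat with hUdef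
  set Sh := {x : EuclideanSpace ℝ (Fin d) | x ∉ K ∧ Metric.infDist x K ≤ atil} with hShdef
  have hShm : MeasurableSet Sh := by
    have h1 : MeasurableSet Kᶜ := hKm.compl
    have h2 : MeasurableSet ((fun x : EuclideanSpace ℝ (Fin d) => Metric.infDist x K) ⁻¹' Set.Iic atil) :=
      ((Metric.continuous_infDist_pt K).measurable) measurableSet_Iic
    exact h1.inter h2
  have hSm : MeasurableSet Shat := meas_Shat B hB A hA
  -- the two error sets
  set W1 := {p : EuclideanSpace ℝ (Fin d) × EuclideanSpace ℝ (Fin d) | p.1 ∈ Sh ∧ dist p.2 p.1 ≤ atil} with hW1def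
  set W2 := {p : EuclideanSpace ℝ (Fin d) × EuclideanSpace ℝ (Fin d) | p.2 ∈ Sh ∧ dist p.1 p.2 ≤ atil} with hW2def
  have hW1m : MeasurableSet W1 := by
    have h1 : MeasurableSet ((fun p : EuclideanSpace ℝ (Fin d) × EuclideanSpace ℝ (Fin d) => p.1) ⁻¹' Sh) := measurable_fst hShm
    have h2 : MeasurableSet ((fun p : EuclideanSpace ℝ (Fin d) × EuclideanSpace ℝ (Fin d) => dist p.2 p.1) ⁻¹' Set.Iic atil) :=
      (measurable_snd.dist measurable_fst) measurableSet_Iic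
    exact h1.inter h2
  have hW1 : ν W1 = volume Sh * volume (Metric.closedBall (0:EuclideanSpace ℝ (Fin d)) atil) :=
    vol_W1 Sh hShm atil
  have hW2 : ν W2 = volume Sh * volume (Metric.closedBall (0:EuclideanSpace ℝ (Fin d)) atil) := by
    have hswap : W2 = Prod.swap ⁻¹' W1 := by
      ext p; simp [hW1def, hW2def, Prod.swap]
    rw [hswap, Measure.measurePreserving_swap.measure_preimage hW1m.nullMeasurableSet, hW1]
  -- containment of the error set
  have hsub : Shat \ (K ×ˢ K) ⊆ W1 ∪ W2 := by
    rintro ⟨y, x⟩ ⟨⟨hmid, hnorm⟩, hnot⟩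
    have hvK : (2:ℝ)⁻¹ • (x + y) ∈ K := hBK hmid
    have hnorm_le : ‖x - y‖ ≤ atil := (hAsub hnorm).2
    have hnot' : y ∉ K ∨ x ∉ K := by
      by_contra h
      push_neg at h
      exact hnot ⟨h.1, h.2⟩
    have hhalf : (0:ℝ) < 2 := by norm_num
    rcases hnot' with hy | hx
    · left
      refine ⟨⟨hy, ?_⟩, ?_⟩
      · have h1 : Metric.infDist y K ≤ dist y ((2:ℝ)⁻¹ • (x + y)) :=
          Metric.infDist_le_dist_of_mem hvK
        have h2 : dist y ((2:ℝ)⁻¹ • (x + y)) = (2:ℝ)⁻¹ * ‖x - y‖ := by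
          rw [dist_eq_norm]
          have : y - (2:ℝ)⁻¹ • (x + y) = -((2:ℝ)⁻¹ • (x - y)) := by module
          rw [this, norm_neg, norm_smul]
          norm_num
        have : Metric.infDist y K ≤ (2:ℝ)⁻¹ * ‖x - y‖ := h2 ▸ h1
        nlinarith [norm_nonneg (x - y)]
      · show dist x y ≤ atil
        rw [dist_eq_norm]; exact hnorm_le
    · right
      refine ⟨⟨hx, ?_⟩, ?_⟩
      · have h1 : Metric.infDist x K ≤ dist x ((2:ℝ)⁻¹ • (x + y)) :=
          Metric.infDist_le_dist_of_mem hvK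
        have h2 : dist x ((2:ℝ)⁻¹ • (x + y)) = (2:ℝ)⁻¹ * ‖x - y‖ := by
          rw [dist_eq_norm]
          have : x - (2:ℝ)⁻¹ • (x + y) = (2:ℝ)⁻¹ • (x - y) := by module
          rw [this, norm_smul]
          norm_num
        have : Metric.infDist x K ≤ (2:ℝ)⁻¹ * ‖x - y‖ := h2 ▸ h1
        nlinarith [norm_nonneg (x - y)]
      · show dist y x ≤ atil
        rw [dist_eq_norm, ← norm_neg]
        simpa using hnorm_le
  -- finiteness facts
  have hShfin : volume Sh ≠ ⊤ := by
    have hsub' : Sh ⊆ Metric.cthickening atil K := by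
      intro x hx
      rw [Metric.mem_cthickening_iff]
      have hne : Metric.infEDist x K ≠ ⊤ := Metric.infEDist_ne_top hKne
      rw [ENNReal.le_ofReal_iff_toReal_le hne hatil.le]
      exact hx.2
    exact ne_top_of_le_ne_top hKc.cthickening.measure_lt_top.ne (measure_mono hsub')
  have hcBfin : volume (Metric.closedBall (0:EuclideanSpace ℝ (Fin d)) atil) ≠ ⊤ :=
    (measure_closedBall_lt_top).ne
  have hMAfin : volume {u : EuclideanSpace ℝ (Fin d) | ‖u‖ ∈ A} ≠ ⊤ := by
    refine ne_top_of_le_ne_top hcBfin (measure_mono ?_)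
    intro u hu
    simpa [Metric.mem_closedBall, dist_eq_norm] using (hAsub hu).2
  have hBfin : volume B ≠ ⊤ := ne_top_of_le_ne_top hKfin (measure_mono hBK)
  have hSfin : ν Shat ≠ ⊤ := by
    rw [prod_Shat B hB A hA]
    exact ENNReal.mul_ne_top hBfin hMAfin
  have hUfin : ν U ≠ ⊤ := ne_top_of_le_ne_top hSfin (measure_mono Set.inter_subset_right)
  -- main measure comparison
  have hUS : ν U ≤ ν Shat := measure_mono Set.inter_subset_right
  have herr : ν Shat ≤ ν U + 2 * (volume Sh * volume (Metric.closedBall (0:EuclideanSpace ℝ (Fin d)) atil)) := by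
    have := measure_inter_add_diff (μ := ν) Shat (hKm.prod hKm)
    have hdiff : ν (Shat \ (K ×ˢ K)) ≤ 2 * (volume Sh * volume (Metric.closedBall (0:EuclideanSpace ℝ (Fin d)) atil)) := by
      calc ν (Shat \ (K ×ˢ K)) ≤ ν (W1 ∪ W2) := measure_mono hsub
        _ ≤ ν W1 + ν W2 := measure_union_le _ _
        _ = 2 * (volume Sh * volume (Metric.closedBall (0:EuclideanSpace ℝ (Fin d)) atil)) := by
            rw [hW1, hW2, two_mul]
    calc ν Shat = ν (Shat ∩ (K ×ˢ K)) + ν (Shat \ (K ×ˢ K)) := this.symm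
      _ ≤ ν U + 2 * (volume Sh * volume (Metric.closedBall (0:EuclideanSpace ℝ (Fin d)) atil)) := by
          gcongr
          rw [hUdef, Set.inter_comm]
  -- pass to real numbers
  have hLHS := double_integral_eq K hKm hKfin B hB A hA
  have hprod := prod_Shat B hB A hA
  have hpolar := vol_normSet hd A hA
  set κ := (volume (Metric.closedBall (0:EuclideanSpace ℝ (Fin d)) 1)).toReal with hκ
  have hκ0 : 0 ≤ κ := ENNReal.toReal_nonneg
  have hL : (κ / 2) * (volume B).toReal * d
      * (∫ r in Set.Ioi (0 : ℝ), Set.indicator A (fun u => u ^ (d - 1)) r)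
      = (1/2) * (ν Shat).toReal := by
    rw [hprod, ENNReal.toReal_mul, hpolar]
    ring
  have hcBval : (volume (Metric.closedBall (0:EuclideanSpace ℝ (Fin d)) atil)).toReal = atil ^ d * κ := by
    rw [Measure.addHaar_closedBall _ _ hatil.le, ← Measure.addHaar_unitClosedBall_eq_addHaar_unitBall,
      finrank_euclideanSpace_fin, ENNReal.toReal_mul, ENNReal.toReal_ofReal (pow_nonneg hatil.le d)]
  have hShR : (volume Sh).toReal ≤ CK * (atil + atil ^ d) := hshell atil hatil
  -- real inequalities
  have hUSr : (ν U).toReal ≤ (ν Shat).toReal := ENNReal.toReal_mono hSfin hUS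
  have herrR : (ν Shat).toReal ≤ (ν U).toReal
      + 2 * ((volume Sh).toReal * (volume (Metric.closedBall (0:EuclideanSpace ℝ (Fin d)) atil)).toReal) := by
    have h2fin : (2 : ENNReal) * (volume Sh * volume (Metric.closedBall (0:EuclideanSpace ℝ (Fin d)) atil)) ≠ ⊤ :=
      ENNReal.mul_ne_top (by norm_num) (ENNReal.mul_ne_top hShfin hcBfin)
    have := ENNReal.toReal_mono (by exact ENNReal.add_ne_top.2 ⟨hUfin, h2fin⟩) herr
    rwa [ENNReal.toReal_add hUfin h2fin, ENNReal.toReal_mul, ENNReal.toReal_mul,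
      ENNReal.toReal_ofNat] at this
  rw [hLHS, hL]
  have habs : |(1:ℝ)/2 * (ν U).toReal - 1/2 * (ν Shat).toReal|
      = 1/2 * ((ν Shat).toReal - (ν U).toReal) := by
    rw [abs_of_nonpos (by linarith), neg_sub]
    ring
  rw [habs]
  have hkey : 1/2 * ((ν Shat).toReal - (ν U).toReal)
      ≤ (volume Sh).toReal * (atil ^ d * κ) := by
    rw [← hcBval]
    linarith
  refine hkey.trans ?_
  have hpow : (atil + atil ^ d) * (atil ^ d * κ) = κ * (atil ^ (d+1) + atil ^ (2*d)) := by
    ring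
  have h1 : (volume Sh).toReal * (atil ^ d * κ) ≤ (CK * (atil + atil ^ d)) * (atil ^ d * κ) := by
    have : 0 ≤ atil ^ d * κ := mul_nonneg (pow_nonneg hatil.le d) hκ0
    exact mul_le_mul_of_nonneg_right hShR this
  refine h1.trans ?_
  have h2 : CK * (atil + atil ^ d) * (atil ^ d * κ) = CK * κ * (atil ^ (d+1) + atil ^ (2*d)) := by
    ring
  rw [h2]
  have hsum : 0 ≤ atil ^ (d+1) + atil ^ (2*d) :=
    add_nonneg (pow_nonneg hatil.le _) (pow_nonneg hatil.le _)
  nlinarith [mul_nonneg (mul_nonneg hCK.le hκ0) hsum]
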